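/- arXiv:2210.09442 — 3 statements merged into one kernel-verified Lean document; each statement's English description precedes it below -/
import Mathlib

section
/- For every positive integer q, the Gamma function satisfies (2πq)^{1/2} (q/e)^q exp(1/(12q+1)) < Γ(q+1) < (2πq)^{1/2} (q/e)^q exp(1/(12q)). -/
open Real Filter Topology

private lemma aux_pow3 (k : ℕ) : (2 * (k : ℝ) + 3) ≤ 3 ^ (k + 1) := by
  induction k with
  | zero => norm_num
  | succ n ih =>
      push_cast
      have h3 : (0:ℝ) < 3 ^ (n+1) := by positivity
      calc (2 * ((n:ℝ) + 1) + 3) ≤ 3 * (2 * n + 3) := by nlinarith [Nat.cast_nonneg (α := ℝ) n]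
        _ ≤ 3 * 3 ^ (n+1) := by nlinarith
        _ = 3 ^ (n+1+1) := by ring

private lemma diff_bounds (m : ℕ) :
    1 / (12 * ((m:ℝ)+1) + 1) - 1 / (12 * ((m:ℝ)+2) + 1)
      < Real.log (Stirling.stirlingSeq (m+1)) - Real.log (Stirling.stirlingSeq (m+2)) ∧
    Real.log (Stirling.stirlingSeq (m+1)) - Real.log (Stirling.stirlingSeq (m+2))
      < 1 / (12 * ((m:ℝ)+1)) - 1 / (12 * ((m:ℝ)+2)) := by
  set N : ℝ := (m:ℝ) + 1 with hN
  have hm0 : (0:ℝ) ≤ (m:ℝ) := Nat.cast_nonneg m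
  have hN1 : 1 ≤ N := by rw [hN]; linarith
  set t2 : ℝ := (1 / (2 * N + 1))^2 with ht2
  have h2N : (0:ℝ) < 2 * N + 1 := by linarith
  have ht2pos : 0 < t2 := by positivity
  have ht2le : t2 ≤ 1/9 := by
    have h1 : 1 / (2*N+1) ≤ 1/3 := by
      apply one_div_le_one_div_of_le <;> linarith
    calc t2 ≤ (1/3)^2 := by
          apply pow_le_pow_left₀ (by positivity) h1
      _ = 1/9 := by norm_num
  have ht2lt1 : t2 < 1 := by linarith
  have hf : HasSum (fun k : ℕ => 1 / (2 * ((k:ℝ)+1) + 1) * t2 ^ (k+1))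
      (Real.log (Stirling.stirlingSeq (m+1)) - Real.log (Stirling.stirlingSeq (m+2))) := by
    have := Stirling.log_stirlingSeq_diff_hasSum m
    convert this using 2 with k
    push_cast [hN, ht2]
    ring
  constructor
  · -- lower bound
    have hgeo : HasSum (fun k : ℕ => (t2/3) ^ (k+1)) ((t2/3) * (1 - t2/3)⁻¹) := by
      have := (hasSum_geometric_of_lt_one (by positivity) (by linarith : t2/3 < 1)).mul_left (t2/3)
      convert this using 2 with k
      · rfl
      · ring
    have hle : ∀ k : ℕ, (t2/3) ^ (k+1) ≤ 1 / (2 * ((k:ℝ)+1) + 1) * t2 ^ (k+1) := by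
      intro k
      have h1 : ((t2:ℝ)/3) ^ (k+1) = t2 ^ (k+1) * (1 / 3 ^ (k+1)) := by
        rw [div_pow]; ring
      have h2 : (1:ℝ) / 3 ^ (k+1) ≤ 1 / (2 * (k:ℝ) + 3) := by
        apply one_div_le_one_div_of_le (by positivity) (aux_pow3 k)
      rw [h1]
      calc t2 ^ (k+1) * (1 / 3 ^ (k+1)) ≤ t2 ^ (k+1) * (1 / (2*(k:ℝ)+3)) := by
            apply mul_le_mul_of_nonneg_left h2 (by positivity)
        _ = 1 / (2 * ((k:ℝ)+1) + 1) * t2 ^ (k+1) := by ring_nf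
    have hi : (t2/3) ^ (1+1) < 1 / (2 * (((1:ℕ):ℝ)+1) + 1) * t2 ^ (1+1) := by
      have h5 : ((t2:ℝ)/3)^(1+1) = t2^(1+1) / 9 := by ring
      have h6 : (1:ℝ) / (2 * (((1:ℕ):ℝ)+1) + 1) * t2 ^ (1+1) = t2^(1+1)/5 := by push_cast; ring
      rw [h5, h6]
      have : (0:ℝ) < t2^(1+1) := by positivity
      apply div_lt_div_of_pos_left this <;> norm_num
    have hlt := hasSum_lt hle hi hgeo hf
    have hval : (t2/3) * (1 - t2/3)⁻¹ = 1 / (12*N^2 + 12*N + 2) := by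
      have h2 : (0:ℝ) < 1 - t2/3 := by linarith
      have hd3 : (0:ℝ) < 12*N^2+12*N+2 := by nlinarith
      rw [mul_inv_eq_iff_eq_mul₀ (ne_of_gt h2), ht2]
      field_simp [ne_of_gt h2N, ne_of_gt hd3]
      ring
    have hfinal : 1 / (12 * N + 1) - 1 / (12 * (N+1) + 1) < 1 / (12*N^2 + 12*N + 2) := by
      have d1 : (0:ℝ) < 12*N+1 := by linarith
      have d2 : (0:ℝ) < 12*(N+1)+1 := by linarith
      have d3 : (0:ℝ) < 12*N^2+12*N+2 := by nlinarith
      rw [div_sub_div _ _ (ne_of_gt d1) (ne_of_gt d2), div_lt_div_iff₀ (by positivity) d3]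
      nlinarith
    have : (m:ℝ) + 2 = N + 1 := by rw [hN]; ring
    rw [this]
    calc 1/(12*N+1) - 1/(12*(N+1)+1) < 1/(12*N^2+12*N+2) := hfinal
      _ = (t2/3) * (1-t2/3)⁻¹ := hval.symm
      _ < _ := hlt
  · -- upper bound
    have hgeo : HasSum (fun k : ℕ => 1/3 * t2 ^ (k+1)) (1/3 * t2 * (1 - t2)⁻¹) := by
      have := (hasSum_geometric_of_lt_one ht2pos.le ht2lt1).mul_left (1/3 * t2)
      convert this using 2 with k
      · rfl
      · ring
    have hle : ∀ k : ℕ, 1 / (2 * ((k:ℝ)+1) + 1) * t2 ^ (k+1) ≤ 1/3 * t2 ^ (k+1) := by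
      intro k
      apply mul_le_mul_of_nonneg_right _ (by positivity)
      apply one_div_le_one_div_of_le (by norm_num)
      have : (0:ℝ) ≤ (k:ℝ) := Nat.cast_nonneg k
      linarith
    have hi : 1 / (2 * (((1:ℕ):ℝ)+1) + 1) * t2 ^ (1+1) < 1/3 * t2 ^ (1+1) := by
      have h6 : (1:ℝ) / (2 * (((1:ℕ):ℝ)+1) + 1) * t2 ^ (1+1) = t2^(1+1)/5 := by push_cast; ring
      have h7 : (1:ℝ)/3 * t2 ^ (1+1) = t2^(1+1)/3 := by ring
      rw [h6, h7]
      have : (0:ℝ) < t2^(1+1) := by positivity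
      apply div_lt_div_of_pos_left this <;> norm_num
    have hlt := hasSum_lt hle hi hf hgeo
    have hval : 1/3 * t2 * (1 - t2)⁻¹ = 1/(12*N) - 1/(12*(N+1)) := by
      have h1 : (1:ℝ) - t2 ≠ 0 := by linarith
      have h2 : N ≠ 0 := by linarith
      have h3 : N + 1 ≠ 0 := by linarith
      rw [mul_inv_eq_iff_eq_mul₀ h1, ht2]
      field_simp [ne_of_gt h2N, h2, h3]
      ring
    have : (m:ℝ) + 2 = N + 1 := by rw [hN]; ring
    rw [this]
    calc Real.log (Stirling.stirlingSeq (m+1)) - Real.log (Stirling.stirlingSeq (m+2))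
        < 1/3 * t2 * (1-t2)⁻¹ := hlt
      _ = 1/(12*N) - 1/(12*(N+1)) := hval

private lemma log_tendsto :
    Tendsto (fun m : ℕ => Real.log (Stirling.stirlingSeq (m+1))) atTop (𝓝 (Real.log (Real.sqrt π))) := by
  have hπ : Real.sqrt π ≠ 0 := by positivity
  exact ((Real.continuousAt_log hπ).tendsto.comp
    (Stirling.tendsto_stirlingSeq_sqrt_pi.comp (tendsto_add_atTop_nat 1)))

private lemma inv_tendsto (a b : ℝ) (ha : 0 < a) :
    Tendsto (fun m : ℕ => 1 / (a * ((m:ℝ)+1) + b)) atTop (𝓝 0) := by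
  simp only [one_div]
  apply Tendsto.inv_tendsto_atTop
  apply tendsto_atTop_add_const_right
  apply Tendsto.const_mul_atTop ha
  exact tendsto_atTop_add_const_right _ _ tendsto_natCast_atTop_atTop

private lemma robbins_log (m : ℕ) :
    Real.log (Real.sqrt π) + 1 / (12 * ((m:ℝ)+1) + 1)
      < Real.log (Stirling.stirlingSeq (m+1)) ∧
    Real.log (Stirling.stirlingSeq (m+1))
      < Real.log (Real.sqrt π) + 1 / (12 * ((m:ℝ)+1)) := by
  set S : ℕ → ℝ := fun m => Real.log (Stirling.stirlingSeq (m+1)) with hS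
  have hB : StrictMono (fun m : ℕ => S m - 1 / (12 * ((m:ℝ)+1))) := by
    apply strictMono_nat_of_lt_succ
    intro n
    have h := (diff_bounds n).2
    push_cast
    have : ((n:ℝ)+1+1) = (n:ℝ)+2 := by ring
    rw [this]
    simp only [hS]
    linarith [h]
  have hC : StrictAnti (fun m : ℕ => S m - 1 / (12 * ((m:ℝ)+1) + 1)) := by
    apply strictAnti_nat_of_succ_lt
    intro n
    have h := (diff_bounds n).1
    push_cast
    have : ((n:ℝ)+1+1) = (n:ℝ)+2 := by ring
    rw [this]
    simp only [hS]
    linarith [h]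
  have hBt : Tendsto (fun m : ℕ => S m - 1 / (12 * ((m:ℝ)+1))) atTop
      (𝓝 (Real.log (Real.sqrt π))) := by
    have := log_tendsto.sub (inv_tendsto 12 0 (by norm_num))
    simpa using this
  have hCt : Tendsto (fun m : ℕ => S m - 1 / (12 * ((m:ℝ)+1) + 1)) atTop
      (𝓝 (Real.log (Real.sqrt π))) := by
    have := log_tendsto.sub (inv_tendsto 12 1 (by norm_num))
    simpa using this
  constructor
  · have h1 := hC (Nat.lt_succ_self m)
    have h2 := hC.antitone.le_of_tendsto hCt (m+1)
    simp only [hS] at h1 h2 ⊢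
    linarith
  · have h1 := hB (Nat.lt_succ_self m)
    have h2 := hB.monotone.ge_of_tendsto hBt (m+1)
    simp only [hS] at h1 h2 ⊢
    linarith

theorem robbins_stirling (q : ℕ) (hq : 0 < q) :
    Real.sqrt (2 * π * q) * ((q : ℝ) / Real.exp 1) ^ q * Real.exp (1 / (12 * q + 1))
      < Real.Gamma (q + 1) ∧
    Real.Gamma (q + 1)
      < Real.sqrt (2 * π * q) * ((q : ℝ) / Real.exp 1) ^ q * Real.exp (1 / (12 * q)) := by
  obtain ⟨m, rfl⟩ : ∃ m, q = m + 1 := ⟨q - 1, (Nat.succ_pred_eq_of_pos hq).symm⟩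
  obtain ⟨hlo, hhi⟩ := robbins_log m
  have hs := Stirling.stirlingSeq'_pos m
  have hq1 : (0:ℝ) < ((m+1 : ℕ):ℝ) := by positivity
  have hπ : (0:ℝ) < Real.sqrt π := Real.sqrt_pos.mpr Real.pi_pos
  have hsq2 : (0:ℝ) < Real.sqrt (2 * ((m+1:ℕ):ℝ)) * (((m+1:ℕ):ℝ) / Real.exp 1) ^ (m+1) := by
    positivity
  have hfact : ((m+1).factorial : ℝ)
      = Stirling.stirlingSeq (m+1) * (Real.sqrt (2 * ((m+1:ℕ):ℝ)) * (((m+1:ℕ):ℝ) / Real.exp 1) ^ (m+1)) := by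
    rw [Stirling.stirlingSeq, div_mul_cancel₀]
    positivity
  have hcast : ((m+1:ℕ):ℝ) = (m:ℝ) + 1 := by push_cast; ring
  have e1 : Real.sqrt π * Real.exp (1 / (12 * ((m:ℝ)+1) + 1)) < Stirling.stirlingSeq (m+1) := by
    have h := Real.exp_lt_exp.mpr hlo
    rwa [Real.exp_add, Real.exp_log hπ, Real.exp_log hs] at h
  have e2 : Stirling.stirlingSeq (m+1) < Real.sqrt π * Real.exp (1 / (12 * ((m:ℝ)+1))) := by
    have h := Real.exp_lt_exp.mpr hhi
    rwa [Real.exp_add, Real.exp_log hπ, Real.exp_log hs] at h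
  have hsplit : Real.sqrt (2 * π * ((m+1:ℕ):ℝ))
      = Real.sqrt π * Real.sqrt (2 * ((m+1:ℕ):ℝ)) := by
    rw [show (2 * π * ((m+1:ℕ):ℝ)) = π * (2 * ((m+1:ℕ):ℝ)) by ring,
      Real.sqrt_mul Real.pi_pos.le]
  rw [Real.Gamma_nat_eq_factorial]
  constructor
  · calc Real.sqrt (2 * π * ((m+1:ℕ):ℝ)) * (((m+1:ℕ):ℝ) / Real.exp 1) ^ (m+1)
          * Real.exp (1 / (12 * ((m+1:ℕ):ℝ) + 1))
        = (Real.sqrt π * Real.exp (1 / (12 * ((m:ℝ)+1) + 1)))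
            * (Real.sqrt (2 * ((m+1:ℕ):ℝ)) * (((m+1:ℕ):ℝ) / Real.exp 1) ^ (m+1)) := by
          rw [hsplit, hcast]; ring
      _ < Stirling.stirlingSeq (m+1)
            * (Real.sqrt (2 * ((m+1:ℕ):ℝ)) * (((m+1:ℕ):ℝ) / Real.exp 1) ^ (m+1)) :=
          mul_lt_mul_of_pos_right e1 hsq2
      _ = ((m+1).factorial : ℝ) := hfact.symm
  · calc ((m+1).factorial : ℝ)
        = Stirling.stirlingSeq (m+1)
            * (Real.sqrt (2 * ((m+1:ℕ):ℝ)) * (((m+1:ℕ):ℝ) / Real.exp 1) ^ (m+1)) := hfact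
      _ < (Real.sqrt π * Real.exp (1 / (12 * ((m:ℝ)+1))))
            * (Real.sqrt (2 * ((m+1:ℕ):ℝ)) * (((m+1:ℕ):ℝ) / Real.exp 1) ^ (m+1)) :=
          mul_lt_mul_of_pos_right e2 hsq2
      _ = Real.sqrt (2 * π * ((m+1:ℕ):ℝ)) * (((m+1:ℕ):ℝ) / Real.exp 1) ^ (m+1)
          * Real.exp (1 / (12 * ((m+1:ℕ):ℝ))) := by
          rw [hsplit, hcast]; ring
end

section
/- Let n > 13 be an integer and let a, b be positive integers with a + b = n and a/n ∈ (0.25, 0.75). Let I = Γ(a+1)Γ(b+1)/Γ(n+2) and L = (2π/n)^{1/2}(a/n)^{a+1/2}(b/n)^{b+1/2}. Then I/L ≤ 1 - 1/(26n). -/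
open Real Filter Nat Stirling Topology
open Real

theorem my_diff_le (n : ℕ) :
    log (stirlingSeq (n + 1)) - log (stirlingSeq (n + 2)) ≤
      1 / (12 * ((n : ℝ) + 1)) - 1 / (12 * ((n : ℝ) + 2)) := by
  have hsum := Stirling.log_stirlingSeq_diff_hasSum n
  set x : ℝ := ((1 : ℝ) / (2 * ↑(n + 1) + 1)) ^ 2 with hx
  have hx0 : 0 ≤ x := sq_nonneg _
  have hx1 : x < 1 := by
    rw [hx, one_div, inv_pow]
    refine inv_lt_one_of_one_lt₀ (one_lt_pow₀ ?_ two_ne_zero)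
    have : (0:ℝ) ≤ (n:ℝ) := Nat.cast_nonneg n
    push_cast
    nlinarith
  have g : HasSum (fun k : ℕ => (1/3 : ℝ) * x ^ (k + 1)) ((1/3) * (x / (1 - x))) := by
    have h := (hasSum_geometric_of_lt_one hx0 hx1).mul_left x
    simp_rw [← _root_.pow_succ'] at h
    exact h.mul_left (1/3)
  have hab : ∀ k : ℕ, (1 : ℝ) / (2 * ↑(k + 1) + 1) * x ^ (k + 1) ≤ (1/3 : ℝ) * x ^ (k + 1) := by
    intro k
    have hp : (0:ℝ) ≤ x ^ (k+1) := pow_nonneg hx0 _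
    have : (1 : ℝ) / (2 * ↑(k + 1) + 1) ≤ 1/3 := by
      rw [div_le_div_iff₀ (by positivity) (by norm_num)]
      have : (0:ℝ) ≤ (k:ℝ) := Nat.cast_nonneg k
      push_cast
      nlinarith
    exact mul_le_mul_of_nonneg_right this hp
  have hle := hasSum_le hab hsum g
  refine hle.trans (le_of_eq ?_)
  rw [hx]
  have h1 : (2 * ((n:ℝ) + 1) + 1) ≠ 0 := by positivity
  push_cast
  have h6 : (24 + (n:ℝ)*36 + (n:ℝ)^2*12) ≠ 0 := by positivity
  field_simp
  rw [div_eq_iff (ne_of_gt (by have : (0:ℝ) ≤ n := Nat.cast_nonneg n; nlinarith))]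
  ring

theorem my_stirling_lower (m : ℕ) (hm : 0 < m) : Real.sqrt π ≤ stirlingSeq m := by
  obtain ⟨k, rfl⟩ := Nat.exists_eq_succ_of_ne_zero hm.ne'
  have ht : Tendsto (fun k : ℕ => stirlingSeq (k + 1)) atTop (𝓝 (Real.sqrt π)) :=
    Stirling.tendsto_stirlingSeq_sqrt_pi.comp (tendsto_add_atTop_nat 1)
  exact Stirling.stirlingSeq'_antitone.le_of_tendsto ht k

theorem my_stirling_upper (m : ℕ) (hm : 0 < m) :
    stirlingSeq m ≤ Real.sqrt π * Real.exp (1 / (12 * (m : ℝ))) := by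
  obtain ⟨k, rfl⟩ := Nat.exists_eq_succ_of_ne_zero hm.ne'
  show stirlingSeq (k + 1) ≤ Real.sqrt π * Real.exp (1 / (12 * ((k + 1 : ℕ) : ℝ)))
  have hpi : (0:ℝ) < Real.sqrt π := Real.sqrt_pos.mpr Real.pi_pos
  have hmono : Monotone (fun j : ℕ => Real.log (stirlingSeq (j + 1)) - 1 / (12 * ((j : ℝ) + 1))) := by
    apply monotone_nat_of_le_succ
    intro j
    have h := my_diff_le j
    have hcast : ((j + 1 : ℕ) : ℝ) + 1 = (j : ℝ) + 2 := by push_cast; ring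
    simp only [hcast]
    have h2 : (j + 1) + 1 = j + 2 := by ring
    rw [h2]
    linarith
  have htend : Tendsto (fun j : ℕ => Real.log (stirlingSeq (j + 1)) - 1 / (12 * ((j : ℝ) + 1)))
      atTop (𝓝 (Real.log (Real.sqrt π))) := by
    have h1 : Tendsto (fun j : ℕ => Real.log (stirlingSeq (j + 1))) atTop
        (𝓝 (Real.log (Real.sqrt π))) := by
      have ht : Tendsto (fun j : ℕ => stirlingSeq (j + 1)) atTop (𝓝 (Real.sqrt π)) :=
        Stirling.tendsto_stirlingSeq_sqrt_pi.comp (tendsto_add_atTop_nat 1)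
      exact ht.log hpi.ne'
    have h2 : Tendsto (fun j : ℕ => 1 / (12 * ((j : ℝ) + 1))) atTop (𝓝 0) := by
      simp only [one_div]
      apply Tendsto.inv_tendsto_atTop
      apply Tendsto.const_mul_atTop (by norm_num : (0:ℝ) < 12)
      exact tendsto_atTop_add_const_right _ _ tendsto_natCast_atTop_atTop
    simpa using h1.sub h2
  have hkey := hmono.ge_of_tendsto htend k
  have hpos := Stirling.stirlingSeq'_pos k
  have : stirlingSeq (k + 1) = Real.exp (Real.log (stirlingSeq (k + 1))) :=
    (Real.exp_log hpos).symm
  rw [this]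
  calc Real.exp (Real.log (stirlingSeq (k + 1)))
      ≤ Real.exp (Real.log (Real.sqrt π) + 1 / (12 * ((k : ℝ) + 1))) := by
        apply Real.exp_le_exp.mpr
        linarith
    _ = Real.sqrt π * Real.exp (1 / (12 * ((k + 1 : ℕ) : ℝ))) := by
        rw [Real.exp_add, Real.exp_log hpi]
        push_cast
        ring

set_option maxHeartbeats 1000000 in
theorem bernoulli_laplace_deterministic_lower (n a b : ℕ) (hn : 13 < n)
    (ha : 0 < a) (hb : 0 < b) (hab : a + b = n)
    (hlo : (0.25 : ℝ) < (a : ℝ) / n) (hhi : (a : ℝ) / n < (0.75 : ℝ)) :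
    (Real.Gamma (a + 1) * Real.Gamma (b + 1) / Real.Gamma (n + 2)) /
        (Real.sqrt (2 * π / n) * ((a : ℝ) / n) ^ ((a : ℝ) + 1 / 2)
          * ((b : ℝ) / n) ^ ((b : ℝ) + 1 / 2))
      ≤ 1 - 1 / (26 * n) := by
  subst hab
  -- rewrite the Gamma functions as factorials
  rw [Real.Gamma_nat_eq_factorial, Real.Gamma_nat_eq_factorial,
    show (((a + b : ℕ) : ℝ) + 2) = ((a + b + 1 : ℕ) : ℝ) + 1 by push_cast; ring,
    Real.Gamma_nat_eq_factorial]
  set C : ℝ := ((a + b : ℕ) : ℝ) with hnr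
  have hC : (0 : ℝ) < C := by rw [hnr]; exact_mod_cast (by omega : 0 < a + b)
  have hC14 : (14 : ℝ) ≤ C := by rw [hnr]; exact_mod_cast by omega
  have hA : (0 : ℝ) < (a : ℝ) := by exact_mod_cast ha
  have hB : (0 : ℝ) < (b : ℝ) := by exact_mod_cast hb
  have habr : C = (a : ℝ) + (b : ℝ) := by rw [hnr]; push_cast; ring
  have hsπ : (0 : ℝ) < Real.sqrt π := Real.sqrt_pos.mpr Real.pi_pos
  -- bounds on a, b
  rw [lt_div_iff₀ hC] at hlo
  rw [div_lt_iff₀ hC] at hhi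
  have h4a : C < 4 * (a : ℝ) := by linarith
  have h3a : 4 * (a : ℝ) < 3 * C := by linarith
  have h4b : C < 4 * (b : ℝ) := by linarith
  -- split the rpow into npow * sqrt
  have hrA : ((a : ℝ) / C) ^ ((a : ℝ) + 1 / 2) = ((a : ℝ) / C) ^ a * Real.sqrt ((a : ℝ) / C) := by
    rw [Real.rpow_add (by positivity), Real.rpow_natCast, ← Real.sqrt_eq_rpow]
  have hrB : ((b : ℝ) / C) ^ ((b : ℝ) + 1 / 2) = ((b : ℝ) / C) ^ b * Real.sqrt ((b : ℝ) / C) := by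
    rw [Real.rpow_add (by positivity), Real.rpow_natCast, ← Real.sqrt_eq_rpow]
  rw [hrA, hrB]
  -- factorials via the Stirling sequence
  have hsa : (0 : ℝ) < stirlingSeq a := lt_of_lt_of_le hsπ (my_stirling_lower a ha)
  have hsb : (0 : ℝ) < stirlingSeq b := lt_of_lt_of_le hsπ (my_stirling_lower b hb)
  have hsn : (0 : ℝ) < stirlingSeq (a + b) :=
    lt_of_lt_of_le hsπ (my_stirling_lower (a + b) (by omega))
  have hfa : ((a ! : ℕ) : ℝ) = stirlingSeq a * (Real.sqrt (2 * (a : ℝ)) * ((a : ℝ) / Real.exp 1) ^ a) := by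
    have hd : Real.sqrt (2 * (a : ℝ)) * ((a : ℝ) / Real.exp 1) ^ a ≠ 0 :=
      (mul_pos (Real.sqrt_pos.mpr (by linarith)) (pow_pos (by positivity) a)).ne'
    rw [stirlingSeq, div_mul_cancel₀ _ hd]
  have hfb : ((b ! : ℕ) : ℝ) = stirlingSeq b * (Real.sqrt (2 * (b : ℝ)) * ((b : ℝ) / Real.exp 1) ^ b) := by
    have hd : Real.sqrt (2 * (b : ℝ)) * ((b : ℝ) / Real.exp 1) ^ b ≠ 0 :=
      (mul_pos (Real.sqrt_pos.mpr (by linarith)) (pow_pos (by positivity) b)).ne'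
    rw [stirlingSeq, div_mul_cancel₀ _ hd]
  have hfn : (((a + b)! : ℕ) : ℝ) = stirlingSeq (a + b) * (Real.sqrt (2 * C) * (C / Real.exp 1) ^ (a + b)) := by
    have hd : Real.sqrt (2 * C) * (C / Real.exp 1) ^ (a + b) ≠ 0 :=
      (mul_pos (Real.sqrt_pos.mpr (by linarith)) (pow_pos (by positivity) (a + b))).ne'
    rw [hnr, stirlingSeq, div_mul_cancel₀ _ hd]
  have hfs : (((a + b + 1)! : ℕ) : ℝ) = (C + 1) * (((a + b)! : ℕ) : ℝ) := by
    rw [Nat.factorial_succ, hnr]; push_cast; ring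
  -- the exact identity for the ratio
  have H : ((a ! : ℕ) : ℝ) * ((b ! : ℕ) : ℝ) / (((a + b + 1)! : ℕ) : ℝ) /
        (Real.sqrt (2 * π / C) * (((a : ℝ) / C) ^ a * Real.sqrt ((a : ℝ) / C))
          * (((b : ℝ) / C) ^ b * Real.sqrt ((b : ℝ) / C)))
      = stirlingSeq a * stirlingSeq b / stirlingSeq (a + b) * (C / ((C + 1) * Real.sqrt π)) := by
    rw [hfa, hfb, hfs, hfn,
      Real.sqrt_div (by positivity : (0:ℝ) ≤ 2 * π) C,
      Real.sqrt_mul (by norm_num : (0:ℝ) ≤ 2) π,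
      Real.sqrt_div hA.le C, Real.sqrt_div hB.le C,
      Real.sqrt_mul (by norm_num : (0:ℝ) ≤ 2) (a : ℝ),
      Real.sqrt_mul (by norm_num : (0:ℝ) ≤ 2) (b : ℝ),
      Real.sqrt_mul (by norm_num : (0:ℝ) ≤ 2) C]
    have hw : Real.sqrt C * Real.sqrt C = C := Real.mul_self_sqrt hC.le
    set w : ℝ := Real.sqrt C with hwdef
    rw [← hw]
    have hw0 : w ≠ 0 := by
      rw [hwdef]; exact (Real.sqrt_pos.mpr hC).ne'
    have hqa : Real.sqrt (a : ℝ) ≠ 0 := (Real.sqrt_pos.mpr hA).ne'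
    have hqb : Real.sqrt (b : ℝ) ≠ 0 := (Real.sqrt_pos.mpr hB).ne'
    have hq2 : Real.sqrt 2 ≠ 0 := by positivity
    have he : Real.exp 1 ≠ 0 := (Real.exp_pos 1).ne'
    have hC1 : w * w + 1 ≠ 0 := by nlinarith [hw, hC]
    field_simp
    simp only [div_pow, pow_add]
    field_simp
  rw [H]
  -- the upper bound on the Stirling ratio
  have hEub : stirlingSeq a * stirlingSeq b / stirlingSeq (a + b)
      ≤ Real.sqrt π * Real.exp (1 / (12 * (a : ℝ)) + 1 / (12 * (b : ℝ))) := by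
    have hub : stirlingSeq a * stirlingSeq b
        ≤ (Real.sqrt π * Real.exp (1 / (12 * (a : ℝ)))) * (Real.sqrt π * Real.exp (1 / (12 * (b : ℝ)))) :=
      mul_le_mul (my_stirling_upper a ha) (my_stirling_upper b hb) hsb.le (by positivity)
    calc stirlingSeq a * stirlingSeq b / stirlingSeq (a + b)
        ≤ (Real.sqrt π * Real.exp (1 / (12 * (a : ℝ)))) * (Real.sqrt π * Real.exp (1 / (12 * (b : ℝ))))
          / Real.sqrt π :=
          div_le_div₀ (by positivity) hub hsπ (my_stirling_lower (a + b) (by omega))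
      _ = Real.sqrt π * Real.exp (1 / (12 * (a : ℝ)) + 1 / (12 * (b : ℝ))) := by
          rw [Real.exp_add]; field_simp
  have hδ : 1 / (12 * (a : ℝ)) + 1 / (12 * (b : ℝ)) ≤ 4 / (9 * C) := by
    rw [div_add_div _ _ (by positivity) (by positivity), div_le_div_iff₀ (by positivity) (by positivity)]
    nlinarith [mul_pos (show (0:ℝ) < 4 * (a : ℝ) - C by linarith)
      (show (0:ℝ) < 3 * C - 4 * (a : ℝ) by linarith)]
  have hE : Real.exp (1 / (12 * (a : ℝ)) + 1 / (12 * (b : ℝ))) ≤ 9 * C / (9 * C - 4) := by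
    refine (Real.exp_le_exp.mpr hδ).trans ?_
    have h4 : (0:ℝ) < 9 * C - 4 := by linarith
    have h5 : (0:ℝ) < Real.exp (4 / (9 * C)) := Real.exp_pos _
    have h3 := Real.add_one_le_exp (-(4 / (9 * C)))
    rw [Real.exp_neg] at h3
    have h6 := mul_le_mul_of_nonneg_right h3 h5.le
    rw [inv_mul_cancel₀ h5.ne'] at h6
    rw [le_div_iff₀ h4]
    have hd : (4 / (9 * C)) * (9 * C) = 4 := by field_simp
    have h7 := mul_le_mul_of_nonneg_right h6 (by linarith : (0:ℝ) ≤ 9 * C)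
    have h8 : (4 / (9 * C)) * (9 * C) * Real.exp (4 / (9 * C)) = 4 * Real.exp (4 / (9 * C)) := by
      rw [hd]
    nlinarith [h7, h8]
  calc stirlingSeq a * stirlingSeq b / stirlingSeq (a + b) * (C / ((C + 1) * Real.sqrt π))
      ≤ (Real.sqrt π * Real.exp (1 / (12 * (a : ℝ)) + 1 / (12 * (b : ℝ)))) * (C / ((C + 1) * Real.sqrt π)) :=
        mul_le_mul_of_nonneg_right hEub (by positivity)
    _ = Real.exp (1 / (12 * (a : ℝ)) + 1 / (12 * (b : ℝ))) * (C / (C + 1)) := by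
        field_simp
    _ ≤ (9 * C / (9 * C - 4)) * (C / (C + 1)) :=
        mul_le_mul_of_nonneg_right hE (by positivity)
    _ ≤ 1 - 1 / (26 * C) := by
        have h1 : (0:ℝ) < (9 * C - 4) * (C + 1) := by nlinarith
        rw [_root_.div_mul_div_comm, show (1:ℝ) - 1 / (26 * C) = (26 * C - 1) / (26 * C) by field_simp,
          div_le_div_iff₀ h1 (by positivity)]
        nlinarith [mul_le_mul_of_nonneg_left hC14 hC.le]
end

section
/- Let Y₁, Y₂, … be i.i.d. Bernoulli(ψ*) random variables with ψ* ∈ (0.25, 0.75), and let Ȳₙ = (1/n)∑_{i=1}^n Yᵢ. Then almost surely there exists N₀ such that for all n > N₀, the ratio of the exact Bayesian normalizing constant p(Y₁,…,Yₙ) = Γ(nȲₙ+1)Γ(n(1-Ȳₙ)+1)/Γ(n+2) to its Laplace approximation L = (2π/n)^{1/2} Ȳₙ^{nȲₙ+1/2} (1-Ȳₙ)^{n(1-Ȳₙ)+1/2} satisfies |p/L - 1| ≥ 1/(26n). -/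
open Real MeasureTheory ProbabilityTheory Finset

/-- Bernoulli(p) distribution on ℝ. -/
noncomputable def bernoulliReal (p : ℝ) : Measure ℝ :=
  ENNReal.ofReal p • Measure.dirac 1 + ENNReal.ofReal (1 - p) • Measure.dirac 0

section Aux
open Filter Nat Topology


lemma step_bound (t : ℕ) : Real.log (Stirling.stirlingSeq (t+1)) - Real.log (Stirling.stirlingSeq (t+2)) ≤
    1/12 * (1/(t+1) - 1/(t+2) : ℝ) := by
  have h := Stirling.log_stirlingSeq_diff_hasSum t
  set q : ℝ := (1 / (2 * ↑(t + 1) + 1)) ^ 2 with hq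
  have hq0 : 0 ≤ q := sq_nonneg _
  have hq1 : q < 1 := by
    rw [hq, one_div, inv_pow]
    exact inv_lt_one_of_one_lt₀ (one_lt_pow₀ (by push_cast; nlinarith [Nat.cast_nonneg (α := ℝ) t]) two_ne_zero)
  have g : HasSum (fun k : ℕ => (1/3 : ℝ) * q ^ (k+1)) ((1/3) * (q * (1-q)⁻¹)) := by
    have h2 := (hasSum_geometric_of_lt_one hq0 hq1).mul_left ((1/3) * q)
    have he : (fun k : ℕ => (1/3 : ℝ) * q ^ (k+1)) = fun k => ((1/3)*q) * q^k := by
      funext k; ring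
    rw [he]
    rw [show (1/3:ℝ) * (q * (1-q)⁻¹) = 1/3*q*(1-q)⁻¹ by ring]; exact h2
  have hle : Real.log (Stirling.stirlingSeq (t+1)) - Real.log (Stirling.stirlingSeq (t+2)) ≤
      (1/3) * (q * (1-q)⁻¹) := by
    refine hasSum_le (fun k => ?_) h g
    have : (1 : ℝ) / (2 * ↑(k + 1) + 1) ≤ 1/3 := by
      rw [div_le_div_iff₀ (by positivity) (by norm_num)]
      push_cast; nlinarith [Nat.cast_nonneg (α := ℝ) k]
    exact mul_le_mul_of_nonneg_right this (pow_nonneg hq0 _)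
  refine hle.trans (le_of_eq ?_)
  have h1 : ((t:ℝ)+1) > 0 := by positivity
  have h2 : ((t:ℝ)+2) > 0 := by positivity
  have hne : (1:ℝ) - q ≠ 0 := by nlinarith
  rw [hq] at hne ⊢
  push_cast at hne ⊢
  have h3 : (2 * ((t:ℝ)+1) + 1) ≠ 0 := by positivity
  field_simp
  ring_nf
  have h4 : (24 + (t:ℝ) * 36 + (t:ℝ) ^ 2 * 12) ≠ 0 := by positivity
  field_simp
  ring

lemma stirling_lower (m : ℕ) (hm : 1 ≤ m) : Real.sqrt π ≤ Stirling.stirlingSeq m := by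
  obtain ⟨t, rfl⟩ := Nat.exists_eq_add_of_le hm
  have hlim : Tendsto (Stirling.stirlingSeq ∘ Nat.succ) atTop (𝓝 (Real.sqrt π)) :=
    (Filter.tendsto_add_atTop_iff_nat 1).mpr Stirling.tendsto_stirlingSeq_sqrt_pi
  have h := Stirling.stirlingSeq'_antitone.le_of_tendsto hlim t
  rw [Nat.add_comm]
  exact h

lemma stirling_log_upper (m : ℕ) (hm : 1 ≤ m) :
    Real.log (Stirling.stirlingSeq m) ≤ Real.log (Real.sqrt π) + 1/(12*m) := by
  have hm0 : (0:ℝ) < (m:ℝ) := by exact_mod_cast hm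
  have key : ∀ d : ℕ, Real.log (Stirling.stirlingSeq m) - Real.log (Stirling.stirlingSeq (m + d)) ≤
      1/12 * (1/m - 1/(m+d) : ℝ) := by
    intro d
    induction d with
    | zero => simp
    | succ d ih =>
      obtain ⟨t, ht⟩ : ∃ t, m + d = t + 1 := ⟨m + d - 1, by omega⟩
      have hstep := step_bound t
      have hcast : ((t : ℝ) + 1) = (m : ℝ) + d := by
        have : ((m + d : ℕ) : ℝ) = ((t + 1 : ℕ) : ℝ) := by rw [ht]
        push_cast at this; linarith
      have h1 : Stirling.stirlingSeq (m + (d+1)) = Stirling.stirlingSeq (t + 2) := by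
        rw [show m + (d+1) = t + 2 by omega]
      have h2 : Stirling.stirlingSeq (m + d) = Stirling.stirlingSeq (t + 1) := by rw [ht]
      rw [h1]
      rw [h2] at ih
      push_cast at hstep ih ⊢
      have e1 : (1:ℝ)/((t:ℝ)+1) = 1/((m:ℝ)+d) := by rw [hcast]
      have e2 : (1:ℝ)/((t:ℝ)+2) = 1/((m:ℝ)+(d+1)) := by
        rw [show ((t:ℝ)+2) = ((m:ℝ)+(d+1)) by linarith]
      linarith [hstep, ih]
  have hlim : Tendsto (fun d => Real.log (Stirling.stirlingSeq (m + d))) atTop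
      (𝓝 (Real.log (Real.sqrt π))) := by
    have h1 : Tendsto (fun d => Stirling.stirlingSeq (d + m)) atTop (𝓝 (Real.sqrt π)) :=
      (Filter.tendsto_add_atTop_iff_nat m).mpr Stirling.tendsto_stirlingSeq_sqrt_pi
    have h2 : Tendsto (fun d => Stirling.stirlingSeq (m + d)) atTop (𝓝 (Real.sqrt π)) := by
      simpa [Nat.add_comm] using h1
    exact (Real.continuousAt_log (by positivity)).tendsto.comp h2
  have hge : ∀ d : ℕ, Real.log (Stirling.stirlingSeq m) - 1/(12*m) ≤
      Real.log (Stirling.stirlingSeq (m + d)) := by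
    intro d
    have hA := key d
    have hd0 : (0:ℝ) ≤ (d:ℝ) := Nat.cast_nonneg d
    have hmd : (0:ℝ) < (m:ℝ) + (d:ℝ) := by linarith
    have hB : (1:ℝ)/12 * (1/(m:ℝ) - 1/((m:ℝ)+d)) ≤ 1/(12*m) := by
      have hpos : (0:ℝ) < 1/((m:ℝ)+d) := by positivity
      have heq : (1:ℝ)/(12*(m:ℝ)) = 1/12 * (1/(m:ℝ)) := by field_simp
      rw [heq]; nlinarith
    push_cast at hA ⊢
    linarith
  have hfin := ge_of_tendsto hlim (Filter.Eventually.of_forall hge)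
  linarith
lemma stirling_upper (m : ℕ) (hm : 1 ≤ m) :
    Stirling.stirlingSeq m ≤ Real.sqrt π * Real.exp (1/(12*m)) := by
  have hpos : 0 < Stirling.stirlingSeq m := by
    obtain ⟨t, rfl⟩ := Nat.exists_eq_add_of_le hm
    simpa [Nat.add_comm] using Stirling.stirlingSeq'_pos t
  have h := stirling_log_upper m hm
  calc Stirling.stirlingSeq m = Real.exp (Real.log (Stirling.stirlingSeq m)) := (Real.exp_log hpos).symm
    _ ≤ Real.exp (Real.log (Real.sqrt π) + 1/(12*m)) := Real.exp_le_exp.mpr h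
    _ = Real.sqrt π * Real.exp (1/(12*m)) := by
        rw [Real.exp_add, Real.exp_log (by positivity)]

lemma det_ratio (n k m : ℕ) (hk : 1 ≤ k) (hm : 1 ≤ m) (hkm : k + m = n) :
    ((k ! : ℝ) * (m ! : ℝ) / (((n+1)! : ℕ) : ℝ)) /
      (Real.sqrt (2*π/n) * ((k:ℝ)/n) ^ ((k:ℝ)+1/2) * ((m:ℝ)/n) ^ ((m:ℝ)+1/2)) =
      ((n:ℝ)/((n:ℝ)+1)) * ((Stirling.stirlingSeq k * Stirling.stirlingSeq m) /
        (Real.sqrt π * Stirling.stirlingSeq n)) := by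
  have hn : 1 ≤ n := by omega
  have hk0 : (0:ℝ) < k := by exact_mod_cast hk
  have hm0 : (0:ℝ) < m := by exact_mod_cast hm
  have hn0 : (0:ℝ) < n := by exact_mod_cast hn
  have hkmR : (k:ℝ) + m = n := by exact_mod_cast hkm
  have hπ : (0:ℝ) < π := Real.pi_pos
  have hskpos : 0 < Stirling.stirlingSeq k := by
    obtain ⟨t, rfl⟩ := Nat.exists_eq_add_of_le hk
    simpa [Nat.add_comm] using Stirling.stirlingSeq'_pos t
  have hsmpos : 0 < Stirling.stirlingSeq m := by
    obtain ⟨t, rfl⟩ := Nat.exists_eq_add_of_le hm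
    simpa [Nat.add_comm] using Stirling.stirlingSeq'_pos t
  have hsnpos : 0 < Stirling.stirlingSeq n := by
    obtain ⟨t, rfl⟩ := Nat.exists_eq_add_of_le hn
    simpa [Nat.add_comm] using Stirling.stirlingSeq'_pos t
  have hfact : ∀ j : ℕ, 1 ≤ j →
      (j ! : ℝ) = Stirling.stirlingSeq j * (Real.sqrt (2*j) * ((j:ℝ)/Real.exp 1)^j) := by
    intro j hj
    have hj0 : (0:ℝ) < j := by exact_mod_cast hj
    have hd : Real.sqrt (2*(j:ℝ)) * ((j:ℝ)/Real.exp 1)^j ≠ 0 := by positivity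
    rw [Stirling.stirlingSeq, div_mul_cancel₀ _ hd]
  have hsplit : ∀ (x : ℝ) (j : ℕ), 0 < x → x ^ ((j:ℝ)+1/2) = x ^ j * Real.sqrt x := by
    intro x j hx
    rw [Real.rpow_add hx, Real.rpow_natCast, Real.sqrt_eq_rpow]
  have hsqrt : Real.sqrt (2*(k:ℝ)) * Real.sqrt (2*(m:ℝ)) * Real.sqrt π =
      Real.sqrt (2*(n:ℝ)) * Real.sqrt (2*π/n) * Real.sqrt ((k:ℝ)/n) * Real.sqrt ((m:ℝ)/n) * n := by
    rw [show (n:ℝ) = Real.sqrt ((n:ℝ)^2) by rw [Real.sqrt_sq hn0.le]]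
    rw [← Real.sqrt_mul (by positivity), ← Real.sqrt_mul (by positivity),
        ← Real.sqrt_mul (by positivity), ← Real.sqrt_mul (by positivity),
        ← Real.sqrt_mul (by positivity)]
    congr 1
    field_simp
    rw [Real.sq_sqrt (by positivity), ← Real.sqrt_mul (by positivity)]; congr 1; field_simp
  have hfn1 : (((n+1)! : ℕ) : ℝ) = ((n:ℝ)+1) * (n ! : ℝ) := by
    rw [Nat.factorial_succ]; push_cast; ring
  rw [hfn1, hfact k hk, hfact m hm, hfact n hn,
      hsplit _ k (by positivity), hsplit _ m (by positivity)]
  have hek : ((k:ℝ)/Real.exp 1)^k = ((k:ℝ)/n)^k * ((n:ℝ)/Real.exp 1)^k := by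
    rw [← mul_pow]; congr 1; field_simp
  have hem : ((m:ℝ)/Real.exp 1)^m = ((m:ℝ)/n)^m * ((n:ℝ)/Real.exp 1)^m := by
    rw [← mul_pow]; congr 1; field_simp
  have hpowsum : ((n:ℝ)/Real.exp 1)^k * ((n:ℝ)/Real.exp 1)^m = ((n:ℝ)/Real.exp 1)^n := by
    rw [← pow_add, hkm]
  rw [hek, hem]
  set A := Real.sqrt (2*(k:ℝ)) with hA
  set B := Real.sqrt (2*(m:ℝ)) with hB
  set C := Real.sqrt (2*(n:ℝ)) with hC
  set D := Real.sqrt (2*π/(n:ℝ)) with hD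
  set E := Real.sqrt ((k:ℝ)/n) with hE
  set F := Real.sqrt ((m:ℝ)/n) with hF
  set G := Real.sqrt π with hG
  set Xk := ((k:ℝ)/n)^k with hXk
  set Xm := ((m:ℝ)/n)^m with hXm
  set Zk := ((n:ℝ)/Real.exp 1)^k with hZk
  set Zm := ((n:ℝ)/Real.exp 1)^m with hZm
  set Zn := ((n:ℝ)/Real.exp 1)^n with hZn
  have hApos : 0 < A := Real.sqrt_pos.mpr (by positivity)
  have hBpos : 0 < B := Real.sqrt_pos.mpr (by positivity)
  have hCpos : 0 < C := Real.sqrt_pos.mpr (by positivity)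
  have hDpos : 0 < D := Real.sqrt_pos.mpr (by positivity)
  have hEpos : 0 < E := Real.sqrt_pos.mpr (by positivity)
  have hFpos : 0 < F := Real.sqrt_pos.mpr (by positivity)
  have hGpos : 0 < G := Real.sqrt_pos.mpr hπ
  have hXkpos : 0 < Xk := by rw [hXk]; positivity
  have hXmpos : 0 < Xm := by rw [hXm]; positivity
  have hZkpos : 0 < Zk := by rw [hZk]; positivity
  have hZmpos : 0 < Zm := by rw [hZm]; positivity
  have hZnpos : 0 < Zn := by rw [hZn]; positivity
  clear_value A B C D E F G Xk Xm Zk Zm Zn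
  field_simp
  linear_combination (A * B * G) * hpowsum + Zn * hsqrt

lemma exp_le_one_add_two_mul {x : ℝ} (h0 : 0 ≤ x) (h1 : x ≤ 1/2) :
    Real.exp x ≤ 1 + 2*x := by
  have h1x : 0 < 1 - x := by linarith
  have hneg : 1 - x ≤ Real.exp (-x) := by linarith [Real.add_one_le_exp (-x)]
  have h2 : (1-x) * Real.exp x ≤ 1 := by
    have := mul_le_mul_of_nonneg_right hneg (Real.exp_pos x).le
    rwa [← Real.exp_add, neg_add_cancel, Real.exp_zero] at this
  have h3 : (1:ℝ) ≤ (1+2*x)*(1-x) := by nlinarith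
  have h4 : (1-x) * Real.exp x ≤ (1+2*x)*(1-x) := h2.trans h3
  nlinarith [h4, h1x]

lemma det_bound (n k m : ℕ) (hk : 1 ≤ k) (hm : 1 ≤ m) (hkm : k + m = n)
    (hlo : (n : ℝ) < 4 * k) (hhi : 4 * (k:ℝ) < 3 * n) :
    1/(26*(n:ℝ)) ≤ |((k ! : ℝ) * (m ! : ℝ) / (((n+1)! : ℕ) : ℝ)) /
      (Real.sqrt (2*π/n) * ((k:ℝ)/n) ^ ((k:ℝ)+1/2) * ((m:ℝ)/n) ^ ((m:ℝ)+1/2)) - 1| := by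
  have hn : 1 ≤ n := by omega
  have hk0 : (0:ℝ) < k := by exact_mod_cast hk
  have hm0 : (0:ℝ) < m := by exact_mod_cast hm
  have hn0 : (0:ℝ) < n := by exact_mod_cast hn
  have hn1 : (1:ℝ) ≤ n := by exact_mod_cast hn
  have hkmR : (k:ℝ) + m = n := by exact_mod_cast hkm
  have hπ : (0:ℝ) < π := Real.pi_pos
  rw [det_ratio n k m hk hm hkm]
  set x : ℝ := 1/(12*k) + 1/(12*m) with hx
  have hx0 : 0 ≤ x := by rw [hx]; positivity
  have hxle : x ≤ 4/(9*n) := by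
    have h16 : 3*(n:ℝ)^2 ≤ 16*((k:ℝ)*m) := by nlinarith
    rw [hx, div_add_div _ _ (by positivity) (by positivity), div_le_div_iff₀ (by positivity) (by positivity)]
    nlinarith
  have hxhalf : x ≤ 1/2 := by
    refine hxle.trans ?_
    rw [div_le_div_iff₀ (by positivity) (by norm_num)]
    nlinarith
  -- ratio upper bound
  have hsp : (0:ℝ) < Real.sqrt π := Real.sqrt_pos.mpr hπ
  have hsnlow := stirling_lower n hn
  have hsnpos : 0 < Stirling.stirlingSeq n := lt_of_lt_of_le hsp hsnlow
  have hnum : Stirling.stirlingSeq k * Stirling.stirlingSeq m ≤ π * Real.exp x := by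
    have h1 := stirling_upper k hk
    have h2 := stirling_upper m hm
    have hskpos : 0 < Stirling.stirlingSeq k := lt_of_lt_of_le hsp (stirling_lower k hk)
    have hsmpos : 0 < Stirling.stirlingSeq m := lt_of_lt_of_le hsp (stirling_lower m hm)
    calc Stirling.stirlingSeq k * Stirling.stirlingSeq m
        ≤ (Real.sqrt π * Real.exp (1/(12*k))) * (Real.sqrt π * Real.exp (1/(12*m))) := by
          exact mul_le_mul h1 h2 hsmpos.le (by positivity)
      _ = π * Real.exp x := by
          rw [hx, Real.exp_add]
          rw [show Real.sqrt π * Real.exp (1/(12*(k:ℝ))) * (Real.sqrt π * Real.exp (1/(12*(m:ℝ))))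
              = (Real.sqrt π * Real.sqrt π) * (Real.exp (1/(12*(k:ℝ))) * Real.exp (1/(12*(m:ℝ)))) by ring]
          rw [Real.mul_self_sqrt hπ.le]
  have hden : π ≤ Real.sqrt π * Stirling.stirlingSeq n := by
    calc π = Real.sqrt π * Real.sqrt π := (Real.mul_self_sqrt hπ.le).symm
      _ ≤ Real.sqrt π * Stirling.stirlingSeq n := by
          exact mul_le_mul_of_nonneg_left hsnlow hsp.le
  have hfrac : (Stirling.stirlingSeq k * Stirling.stirlingSeq m) /
      (Real.sqrt π * Stirling.stirlingSeq n) ≤ Real.exp x := by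
    have h := div_le_div₀ (by positivity) hnum hπ hden
    refine h.trans (le_of_eq ?_)
    rw [mul_comm π (Real.exp x), mul_div_assoc, div_self hπ.ne', mul_one]
  have hexp : Real.exp x ≤ 1 + 8/(9*n) := by
    refine (exp_le_one_add_two_mul hx0 hxhalf).trans ?_
    have : 2*x ≤ 8/(9*(n:ℝ)) := by
      rw [show (8:ℝ)/(9*n) = 2*(4/(9*n)) by ring]
      linarith
    linarith
  have hfracpos : 0 ≤ (Stirling.stirlingSeq k * Stirling.stirlingSeq m) /
      (Real.sqrt π * Stirling.stirlingSeq n) := by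
    have hskpos : 0 < Stirling.stirlingSeq k := lt_of_lt_of_le hsp (stirling_lower k hk)
    have hsmpos : 0 < Stirling.stirlingSeq m := lt_of_lt_of_le hsp (stirling_lower m hm)
    positivity
  have hR : ((n:ℝ)/((n:ℝ)+1)) * ((Stirling.stirlingSeq k * Stirling.stirlingSeq m) /
      (Real.sqrt π * Stirling.stirlingSeq n)) ≤ ((n:ℝ) + 8/9)/((n:ℝ)+1) := by
    calc ((n:ℝ)/((n:ℝ)+1)) * ((Stirling.stirlingSeq k * Stirling.stirlingSeq m) /
        (Real.sqrt π * Stirling.stirlingSeq n))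
        ≤ ((n:ℝ)/((n:ℝ)+1)) * (1 + 8/(9*n)) := by
          exact mul_le_mul_of_nonneg_left (hfrac.trans hexp) (by positivity)
      _ = ((n:ℝ) + 8/9)/((n:ℝ)+1) := by field_simp
  set R := ((n:ℝ)/((n:ℝ)+1)) * ((Stirling.stirlingSeq k * Stirling.stirlingSeq m) /
      (Real.sqrt π * Stirling.stirlingSeq n)) with hRdef
  have habs : 1 - R ≤ |R - 1| := by
    rw [abs_sub_comm]
    exact le_abs_self _
  refine le_trans ?_ habs
  have hfin : ((n:ℝ) + 8/9)/((n:ℝ)+1) ≤ 1 - 1/(26*n) := by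
    have h1 : (0:ℝ) < (n:ℝ)+1 := by positivity
    have h2 : (0:ℝ) < 26*(n:ℝ) := by positivity
    rw [div_le_iff₀ h1]
    have h3 : (1:ℝ)/(26*(n:ℝ)) * (26*(n:ℝ)) = 1 := div_mul_cancel₀ 1 h2.ne'
    nlinarith [h3, hn1, (by positivity : (0:ℝ) < 1/(26*(n:ℝ)))]
  linarith [hR, hfin]


lemma sum_nat_of_mem01 (f : ℕ → ℝ) (h : ∀ i, f i ∈ ({0,1} : Set ℝ)) (n : ℕ) :
    ∃ K : ℕ, (∑ i ∈ range n, f i) = K ∧ K ≤ n := by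
  induction n with
  | zero => exact ⟨0, by simp, le_refl 0⟩
  | succ n ih =>
    obtain ⟨K, hK, hKn⟩ := ih
    rcases h n with h0 | h1
    · exact ⟨K, by rw [Finset.sum_range_succ, hK, h0, add_zero], by omega⟩
    · refine ⟨K + 1, ?_, by omega⟩
      rw [Finset.sum_range_succ, hK, Set.mem_singleton_iff.mp h1]
      push_cast; ring

lemma integrable_id_dirac (a : ℝ) : Integrable (fun y : ℝ => y) (Measure.dirac a) := by
  have hae : (fun y : ℝ => y) =ᵐ[Measure.dirac a] (fun _ => a) := by
    rw [MeasureTheory.ae_dirac_eq]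
    exact Filter.eventually_pure.2 rfl
  exact (integrable_const a).congr hae.symm

lemma bern_integral (ψ : ℝ) (h0 : 0 ≤ ψ) (h1 : ψ ≤ 1) :
    ∫ y, y ∂(bernoulliReal ψ) = ψ := by
  rw [bernoulliReal]
  have hI1 : Integrable (fun y : ℝ => y) (ENNReal.ofReal ψ • Measure.dirac 1) :=
    (integrable_id_dirac 1).smul_measure ENNReal.ofReal_ne_top
  have hI0 : Integrable (fun y : ℝ => y) (ENNReal.ofReal (1-ψ) • Measure.dirac 0) :=
    (integrable_id_dirac 0).smul_measure ENNReal.ofReal_ne_top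
  rw [integral_add_measure hI1 hI0, integral_smul_measure, integral_smul_measure,
      integral_dirac, integral_dirac, ENNReal.toReal_ofReal h0,
      ENNReal.toReal_ofReal (by linarith : (0:ℝ) ≤ 1 - ψ)]
  simp

end Aux

/-- Stochastic lower bound for the Laplace approximation of the normalizing constant
of the Bernoulli model with uniform prior. -/
theorem bernoulli_laplace_stochastic_lower
    {Ω : Type*} [MeasurableSpace Ω] (μ : Measure Ω) [IsProbabilityMeasure μ]
    (ψ : ℝ) (hψlo : (0.25 : ℝ) < ψ) (hψhi : ψ < (0.75 : ℝ))
    (Y : ℕ → Ω → ℝ)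
    (hmeas : ∀ i, Measurable (Y i))
    (hindep : iIndepFun Y μ)
    (hdist : ∀ i, μ.map (Y i) = bernoulliReal ψ) :
    ∀ᵐ ω ∂μ, ∃ N₀ : ℕ, ∀ n > N₀,
      let Ybar := (∑ i ∈ range n, Y i ω) / n
      let p := Real.Gamma (n * Ybar + 1) * Real.Gamma (n * (1 - Ybar) + 1)
                / Real.Gamma (n + 2)
      let L := Real.sqrt (2 * π / n) * Ybar ^ (n * Ybar + 1 / 2)
                * (1 - Ybar) ^ (n * (1 - Ybar) + 1 / 2)
      |p / L - 1| ≥ 1 / (26 * n) := by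
  have hψ0 : (0:ℝ) ≤ ψ := by norm_num at hψlo ⊢; linarith
  have hψ1 : ψ ≤ 1 := by norm_num at hψhi ⊢; linarith
  -- values in {0,1} a.s.
  have h01 : ∀ᵐ ω ∂μ, ∀ i, Y i ω ∈ ({0,1} : Set ℝ) := by
    rw [MeasureTheory.ae_all_iff]
    intro i
    have hS : MeasurableSet (({0,1} : Set ℝ)ᶜ) :=
      ((Set.toFinite ({0,1} : Set ℝ)).measurableSet).compl
    have hz : μ ((Y i)⁻¹' (({0,1} : Set ℝ)ᶜ)) = 0 := by
      rw [← MeasureTheory.Measure.map_apply (hmeas i) hS, hdist i, bernoulliReal]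
      rw [MeasureTheory.Measure.add_apply, MeasureTheory.Measure.smul_apply,
          MeasureTheory.Measure.smul_apply,
          MeasureTheory.Measure.dirac_apply' _ hS, MeasureTheory.Measure.dirac_apply' _ hS]
      rw [Set.indicator_of_notMem (by simp) _, Set.indicator_of_notMem (by simp) _]
      simp
    rw [MeasureTheory.ae_iff]
    exact hz
  -- integrability and mean
  have hb : ∀ᵐ ω ∂μ, ‖Y 0 ω‖ ≤ 1 := by
    filter_upwards [h01] with ω hω
    rcases hω 0 with h | h
    · rw [h]; simp
    · rw [Set.mem_singleton_iff.mp h]; simp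
  have hint : Integrable (Y 0) μ :=
    Integrable.mono' (integrable_const 1) (hmeas 0).aestronglyMeasurable hb
  have hident : ∀ i, IdentDistrib (Y i) (Y 0) μ μ := fun i =>
    ⟨(hmeas i).aemeasurable, (hmeas 0).aemeasurable, by rw [hdist i, hdist 0]⟩
  have hpind : Pairwise (Function.onFun (IndepFun · · μ) Y) := fun i j hij => hindep.indepFun hij
  have hslln := ProbabilityTheory.strong_law_ae_real Y hint hpind hident
  have hmean : μ[Y 0] = ψ := by
    have h1 : ∫ y, y ∂(μ.map (Y 0)) = ∫ ω, Y 0 ω ∂μ :=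
      integral_map (hmeas 0).aemeasurable aestronglyMeasurable_id
    rw [hdist 0, bern_integral ψ hψ0 hψ1] at h1
    exact h1.symm
  rw [hmean] at hslln
  filter_upwards [h01, hslln] with ω hω hT
  have hio : ∀ᶠ n : ℕ in Filter.atTop,
      (∑ i ∈ range n, Y i ω) / n ∈ Set.Ioo (0.25:ℝ) 0.75 :=
    hT (Ioo_mem_nhds hψlo hψhi)
  obtain ⟨N, hN⟩ := Filter.eventually_atTop.1 hio
  refine ⟨N, fun n hn => ?_⟩
  intro Ybar p L
  have hn1 : 1 ≤ n := by omega
  have hn0 : (0:ℝ) < n := by exact_mod_cast hn1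
  obtain ⟨K, hK, hKn⟩ := sum_nat_of_mem01 (fun i => Y i ω) hω n
  have hIoo := hN n (Nat.le_of_lt hn)
  have hYbar : Ybar = (K:ℝ)/n := by
    show (∑ i ∈ range n, Y i ω) / n = (K:ℝ)/n
    rw [hK]
  rw [hK] at hIoo
  have h14 : (0.25:ℝ) * n < K := by
    have := hIoo.1
    rwa [lt_div_iff₀ hn0] at this
  have h34 : (K:ℝ) < 0.75 * n := by
    have := hIoo.2
    rwa [div_lt_iff₀ hn0] at this
  have hlo : (n:ℝ) < 4 * K := by norm_num at h14; linarith
  have hhi : 4 * (K:ℝ) < 3 * n := by norm_num at h34; linarith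
  have hk1 : 1 ≤ K := by
    by_contra h
    have : K = 0 := by omega
    rw [this] at hlo
    simp at hlo
    linarith
  have hKltn : K < n := by
    by_contra h
    have hKn' : (n:ℝ) ≤ K := by exact_mod_cast not_lt.mp h
    linarith
  set m := n - K with hm
  have hm1 : 1 ≤ m := by omega
  have hkm : K + m = n := by omega
  have hmR : (m:ℝ) = (n:ℝ) - K := by
    have : ((K + m : ℕ) : ℝ) = (n:ℝ) := by rw [hkm]
    push_cast at this; linarith
  have hnY : (n:ℝ) * Ybar = K := by
    rw [hYbar]; field_simp
  have hnY' : (n:ℝ) * (1 - Ybar) = m := by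
    rw [hYbar, hmR]; field_simp
  have h1Y : 1 - Ybar = (m:ℝ)/n := by
    rw [hYbar, hmR]; field_simp
  have hp : p = (((Nat.factorial K : ℕ) : ℝ) * ((Nat.factorial m : ℕ) : ℝ) / ((Nat.factorial (n+1) : ℕ) : ℝ)) := by
    show Real.Gamma (n * Ybar + 1) * Real.Gamma (n * (1 - Ybar) + 1) / Real.Gamma (n + 2)
      = (((Nat.factorial K : ℕ) : ℝ) * ((Nat.factorial m : ℕ) : ℝ) / ((Nat.factorial (n+1) : ℕ) : ℝ))
    rw [hnY, hnY', Real.Gamma_nat_eq_factorial, Real.Gamma_nat_eq_factorial,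
        show ((n:ℝ) + 2) = ((n+1:ℕ):ℝ) + 1 by push_cast; ring,
        Real.Gamma_nat_eq_factorial]
  have hL : L = Real.sqrt (2*π/n) * ((K:ℝ)/n) ^ ((K:ℝ)+1/2) * ((m:ℝ)/n) ^ ((m:ℝ)+1/2) := by
    show Real.sqrt (2 * π / n) * Ybar ^ (n * Ybar + 1 / 2) * (1 - Ybar) ^ (n * (1 - Ybar) + 1 / 2)
      = Real.sqrt (2*π/n) * ((K:ℝ)/n) ^ ((K:ℝ)+1/2) * ((m:ℝ)/n) ^ ((m:ℝ)+1/2)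
    rw [hnY, hnY', h1Y, hYbar]
  rw [ge_iff_le, hp, hL]
  exact det_bound n K m hk1 hm1 hkm hlo hhi
end
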